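/- Let h : [0, ∞) → [0, ∞) be a gauge function, i.e. h is continuous, nondecreasing, h(0) = 0 and h(t) > 0 for t > 0. Let E ⊆ ℂ be a compact set and let c > 0, C₁ > 0 be constants. Suppose that for every δ > 0 there exists a finite family 𝒢 of closed balls in ℂ with positive radii such that: every ball in 𝒢 has radius at most δ; the balls in 𝒢 are pairwise disjoint; every ball in 𝒢 has nonempty intersection with E; the sum over B ∈ 𝒢 of h(r(B)) is at least c, where r(B) is the radius of B; and for every z ∈ ℂ and every ρ > 0, the sum of h(r(B)) over those B ∈ 𝒢 contained in the closed ball of center z and radius ρ is at most C₁·h(ρ). Then the generalized Hausdorff measure of E with gauge h is strictly positive: H^h(E) > 0. -/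

import Mathlib

open Metric MeasureTheory Set
open scoped ENNReal

open scoped Classical in
/-- A packing criterion for positivity of generalized Hausdorff measure with gauge `h`:
if a compact set `E ⊆ ℂ` admits, at every scale `δ > 0`, a finite family of pairwise
disjoint closed balls of radii `≤ δ` meeting `E`, whose radii satisfy `∑ h(r(B)) ≥ c`
together with the Carleson packing condition `∑_{B ⊆ closedBall z ρ} h(r(B)) ≤ C₁·h(ρ)`,
then the `h`-Hausdorff measure of `E` is strictly positive. -/
theorem stmt13 (h : ℝ → ℝ)
    (hcont : ContinuousOn h (Ici 0)) (hmono : MonotoneOn h (Ici 0))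
    (h0 : h 0 = 0) (hpos : ∀ t : ℝ, 0 < t → 0 < h t)
    (E : Set ℂ) (hE : IsCompact E)
    (c C₁ : ℝ) (hc : 0 < c) (hC₁ : 0 < C₁)
    (hfam : ∀ δ : ℝ, 0 < δ →
      ∃ (n : ℕ) (z : Fin n → ℂ) (r : Fin n → ℝ),
        (∀ i, 0 < r i) ∧
        (∀ i, r i ≤ δ) ∧
        (Pairwise fun i j => Disjoint (closedBall (z i) (r i)) (closedBall (z j) (r j))) ∧
        (∀ i, (closedBall (z i) (r i) ∩ E).Nonempty) ∧
        c ≤ ∑ i, h (r i) ∧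
        (∀ (w : ℂ) (ρ : ℝ), 0 < ρ →
          ∑ i ∈ Finset.univ.filter (fun i => closedBall (z i) (r i) ⊆ closedBall w ρ),
            h (r i) ≤ C₁ * h ρ)) :
    0 < (Measure.mkMetric (fun d : ℝ≥0∞ => ENNReal.ofReal (h d.toReal)) : Measure ℂ) E := by
  rw [pos_iff_ne_zero]
  intro hμ
  have hεpos : 0 < c / (2 * C₁) := by positivity
  -- extract a good cover from measure zero
  have h1 : (⨅ (t : ℕ → Set ℂ) (_ : E ⊆ iUnion t) (_ : ∀ n, EMetric.diam (t n) ≤ 1),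
      ∑' n, ⨆ _ : (t n).Nonempty,
        ENNReal.ofReal (h (EMetric.diam (t n)).toReal)) < ENNReal.ofReal (c / (2 * C₁)) := by
    have := Measure.mkMetric_apply (fun d : ℝ≥0∞ => ENNReal.ofReal (h d.toReal)) E
    rw [hμ] at this
    have h2 : (⨅ (t : ℕ → Set ℂ) (_ : E ⊆ iUnion t) (_ : ∀ n, EMetric.diam (t n) ≤ 1),
        ∑' n, ⨆ _ : (t n).Nonempty,
          ENNReal.ofReal (h (EMetric.diam (t n)).toReal)) ≤ 0 := by
      rw [this]
      exact le_iSup₂ (f := fun (r : ℝ≥0∞) (_ : 0 < r) =>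
        ⨅ (t : ℕ → Set ℂ) (_ : E ⊆ iUnion t) (_ : ∀ n, EMetric.diam (t n) ≤ r),
          ∑' n, ⨆ _ : (t n).Nonempty,
            ENNReal.ofReal (h (EMetric.diam (t n)).toReal)) 1 one_pos
    exact lt_of_le_of_lt h2 (ENNReal.ofReal_pos.2 hεpos)
  simp only [iInf_lt_iff] at h1
  obtain ⟨t, htE, htd, htsum⟩ := h1
  -- real diameters
  set d : ℕ → ℝ := fun n => (EMetric.diam (t n)).toReal with hd_def
  have hd0 : ∀ n, 0 ≤ d n := fun n => ENNReal.toReal_nonneg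
  have hdfin : ∀ n, EMetric.diam (t n) ≠ ⊤ := fun n => (lt_of_le_of_lt (htd n) (by simp)).ne
  have hdist : ∀ n, ∀ p ∈ t n, ∀ q ∈ t n, dist p q ≤ d n := by
    intro n p hp q hq
    rw [dist_edist]
    exact ENNReal.toReal_mono (hdfin n) (EMetric.edist_le_diam_of_mem hp hq)
  -- centers
  have hx : ∀ n : ℕ, ∃ x : ℂ, (t n).Nonempty → x ∈ t n := by
    intro n
    by_cases hn : (t n).Nonempty
    · exact ⟨hn.choose, fun _ => hn.choose_spec⟩
    · exact ⟨0, fun hn' => absurd hn' hn⟩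
  choose x hx using hx
  -- error terms
  set κ : ℕ → ℝ := fun n => c / (4 * C₁) * (1 / 2) ^ (n + 1) with hκ_def
  have hκpos : ∀ n, 0 < κ n := fun n => by positivity
  -- continuity: enlargement radii
  have hη : ∀ n : ℕ, ∃ e : ℝ, 0 < e ∧ h (d n + 3 * e) ≤ h (d n) + κ n := by
    intro n
    have hdm : d n ∈ Ici (0 : ℝ) := hd0 n
    have hcw := hcont (d n) hdm
    rw [Metric.continuousWithinAt_iff] at hcw
    obtain ⟨e, he0, he⟩ := hcw (κ n) (hκpos n)
    refine ⟨e / 6, by positivity, ?_⟩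
    have h1 := he (x := d n + 3 * (e / 6)) (by simp only [mem_Ici]; have := hd0 n; linarith)
      (by rw [Real.dist_eq]; rw [show d n + 3 * (e / 6) - d n = e / 2 by ring,
        abs_of_nonneg (by linarith)]; linarith)
    rw [Real.dist_eq, abs_lt] at h1
    linarith
  choose η hηpos hηle using hη
  -- open cover and finite subcover
  have hcov : E ⊆ ⋃ n, Metric.thickening (η n) (t n) := by
    intro p hp
    obtain ⟨n, hn⟩ := mem_iUnion.1 (htE hp)
    exact mem_iUnion.2 ⟨n, Metric.self_subset_thickening (hηpos n) (t n) hn⟩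
  obtain ⟨s, hs⟩ := hE.elim_finite_subcover _ (fun n => Metric.isOpen_thickening) hcov
  -- scale
  set s' : Finset ℕ := insert 0 s with hs'_def
  have hs'ne : s'.Nonempty := Finset.insert_nonempty _ _
  set δ : ℝ := s'.inf' hs'ne η with hδ_def
  have hδpos : 0 < δ := by
    rw [hδ_def, Finset.lt_inf'_iff]
    exact fun n _ => hηpos n
  have hδle : ∀ n ∈ s, δ ≤ η n := fun n hn =>
    Finset.inf'_le η (Finset.mem_insert_of_mem hn)
  -- the packing family at scale δ
  obtain ⟨k, z, r, hr0, hrδ, _, hmeet, hcsum, hpack⟩ := hfam δ hδpos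
  -- assignment of balls to cover elements
  have hassign : ∀ i : Fin k, ∃ n, n ∈ s ∧
      closedBall (z i) (r i) ⊆ closedBall (x n) (d n + 3 * η n) := by
    intro i
    obtain ⟨p, hpB, hpE⟩ := hmeet i
    obtain ⟨n, hns, hpn⟩ := Set.mem_iUnion₂.1 (hs hpE)
    obtain ⟨q, hq, hpq⟩ := Metric.mem_thickening_iff.1 hpn
    have hxn : x n ∈ t n := hx n ⟨q, hq⟩
    refine ⟨n, hns, fun w hw => ?_⟩
    rw [Metric.mem_closedBall] at hw hpB ⊢
    have h1 : dist w (x n) ≤ dist w (z i) + dist (z i) p + dist p q + dist q (x n) := by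
      have := dist_triangle4 w (z i) p (x n)
      have := dist_triangle p q (x n)
      linarith [dist_triangle4 w (z i) p (x n), dist_triangle p q (x n),
        dist_triangle w p (x n)]
    have h2 : dist (z i) p ≤ r i := by rw [dist_comm]; exact hpB
    have h3 : dist q (x n) ≤ d n := hdist n q hq (x n) hxn
    have h4 : r i ≤ η n := le_trans (hrδ i) (hδle n hns)
    linarith [h1, h2, h3, h4, hpq]
  choose φ hφs hφsub using hassign
  -- nonnegativity of h on [0,∞)
  have hnn : ∀ a : ℝ, 0 ≤ a → 0 ≤ h a := by
    intro a ha
    rw [← h0]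
    exact hmono (le_refl (0:ℝ)) ha ha
  -- main chain of inequalities
  have key : c ≤ C₁ * (∑ n ∈ s, h (d n)) + C₁ * (∑ n ∈ s, κ n) := by
    calc c ≤ ∑ i, h (r i) := hcsum
      _ = ∑ n ∈ s, ∑ i ∈ Finset.univ.filter (fun i => φ i = n), h (r i) :=
        (Finset.sum_fiberwise_of_maps_to (fun i _ => hφs i) _).symm
      _ ≤ ∑ n ∈ s, ∑ i ∈ Finset.univ.filter
            (fun i => closedBall (z i) (r i) ⊆ closedBall (x n) (d n + 3 * η n)), h (r i) := by
        refine Finset.sum_le_sum fun n _ => ?_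
        refine Finset.sum_le_sum_of_subset_of_nonneg ?_ (fun i _ _ => hnn _ (hr0 i).le)
        intro i hi
        simp only [Finset.mem_filter, Finset.mem_univ, true_and] at hi ⊢
        rw [← hi]
        exact hφsub i
      _ ≤ ∑ n ∈ s, C₁ * h (d n + 3 * η n) := by
        refine Finset.sum_le_sum fun n _ => ?_
        exact hpack (x n) (d n + 3 * η n) (by nlinarith [hd0 n, hηpos n])
      _ ≤ ∑ n ∈ s, C₁ * (h (d n) + κ n) := by
        refine Finset.sum_le_sum fun n _ => ?_
        exact mul_le_mul_of_nonneg_left (hηle n) hC₁.le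
      _ = C₁ * (∑ n ∈ s, h (d n)) + C₁ * (∑ n ∈ s, κ n) := by
        simp only [mul_add, Finset.sum_add_distrib, Finset.mul_sum]
  -- bound on ∑ h(d n) from the covering sum
  have hsumd : ∑ n ∈ s, h (d n) < c / (2 * C₁) := by
    have hle : (ENNReal.ofReal (∑ n ∈ s, h (d n))) < ENNReal.ofReal (c / (2 * C₁)) := by
      calc ENNReal.ofReal (∑ n ∈ s, h (d n)) = ∑ n ∈ s, ENNReal.ofReal (h (d n)) :=
            ENNReal.ofReal_sum_of_nonneg (fun n _ => hnn _ (hd0 n))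
        _ ≤ ∑ n ∈ s, ⨆ _ : (t n).Nonempty,
              ENNReal.ofReal (h (EMetric.diam (t n)).toReal) := by
            refine Finset.sum_le_sum fun n _ => ?_
            by_cases hn : (t n).Nonempty
            · simp [hn]; exact le_rfl
            · have : t n = ∅ := Set.not_nonempty_iff_eq_empty.1 hn
              simp [hn, hd_def, this, h0, EMetric.diam]
        _ ≤ ∑' n, ⨆ _ : (t n).Nonempty,
              ENNReal.ofReal (h (EMetric.diam (t n)).toReal) := ENNReal.sum_le_tsum s
        _ < ENNReal.ofReal (c / (2 * C₁)) := htsum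
    rwa [ENNReal.ofReal_lt_ofReal_iff hεpos] at hle
  -- bound on ∑ κ n
  have hsumκ : ∑ n ∈ s, κ n ≤ c / (4 * C₁) := by
    obtain ⟨N, hN⟩ := s.exists_nat_subset_range
    have h1 : ∑ n ∈ s, (1 / 2 : ℝ) ^ (n + 1) ≤ ∑ n ∈ Finset.range N, (1 / 2 : ℝ) ^ (n + 1) :=
      Finset.sum_le_sum_of_subset_of_nonneg hN (fun i _ _ => by positivity)
    have h2 : ∑ n ∈ Finset.range N, (1 / 2 : ℝ) ^ (n + 1) ≤ 1 := by
      have := sum_geometric_two_le N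
      have h3 : ∑ n ∈ Finset.range N, (1 / 2 : ℝ) ^ (n + 1)
          = (1 / 2) * ∑ n ∈ Finset.range N, (1 / 2 : ℝ) ^ n := by
        rw [Finset.mul_sum]
        exact Finset.sum_congr rfl fun n _ => by ring
      rw [h3]; linarith
    have h4 : ∑ n ∈ s, κ n = c / (4 * C₁) * ∑ n ∈ s, (1 / 2 : ℝ) ^ (n + 1) := by
      rw [Finset.mul_sum]
    rw [h4]
    have hq : (0:ℝ) ≤ c / (4 * C₁) := by positivity
    nlinarith [mul_le_mul_of_nonneg_left (h1.trans h2) hq]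
  have hfinal : C₁ * (∑ n ∈ s, h (d n)) + C₁ * (∑ n ∈ s, κ n) < c := by
    have e1 : C₁ * (∑ n ∈ s, h (d n)) < C₁ * (c / (2 * C₁)) :=
      mul_lt_mul_of_pos_left hsumd hC₁
    have e2 : C₁ * (∑ n ∈ s, κ n) ≤ C₁ * (c / (4 * C₁)) :=
      mul_le_mul_of_nonneg_left hsumκ hC₁.le
    have e3 : C₁ * (c / (2 * C₁)) = c / 2 := by field_simp
    have e4 : C₁ * (c / (4 * C₁)) = c / 4 := by field_simp
    linarith
  linarith [key, hfinal]
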